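/- arXiv:1001.4031 — 4 statements merged into one kernel-verified Lean document; each statement's English description precedes it below -/
import Mathlib

section
/- For each fixed t ∈ (0,1], σ_loc²(1+t, x) → 3 as x → +∞; moreover the convergence is uniform on compact time intervals away from t = 0: for every ε ∈ (0,1] and every η > 0 there exists M > 0 such that σ_loc²(1+t, x) ≥ 3 − η for all t ∈ [ε, 1] and all x > M. -/
open Real Set

/-- `Σ₊(t)`: integrated variance of the `+` branch of the mixing model. -/
noncomputable def Sigp (t : ℝ) : ℝ :=
  if t ≤ 1 then 2 * t else if t ≤ 2 then 3 * t - 1 else t + 3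

/-- `Σ₋(t)`: integrated variance of the `−` branch of the mixing model. -/
noncomputable def Sigm (t : ℝ) : ℝ :=
  if t ≤ 1 then 2 * t else if t ≤ 2 then t + 1 else 3 * t - 3

/-- `σ₊²(t)`: instantaneous variance of the `+` branch. -/
noncomputable def sigp2 (t : ℝ) : ℝ :=
  if t ≤ 1 then 2 else if t ≤ 2 then 3 else 1

/-- `σ₋²(t)`: instantaneous variance of the `−` branch. -/
noncomputable def sigm2 (t : ℝ) : ℝ :=
  if t ≤ 1 then 2 else if t ≤ 2 then 1 else 3

/-- `p₊(t,x) = Σ₊(t)^{-1/2} exp(−(x+Σ₊(t)/2)²/(2Σ₊(t)))`. -/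
noncomputable def pplus (t x : ℝ) : ℝ :=
  Real.exp (-(x + Sigp t / 2) ^ 2 / (2 * Sigp t)) / Real.sqrt (Sigp t)

/-- `p₋(t,x) = Σ₋(t)^{-1/2} exp(−(x+Σ₋(t)/2)²/(2Σ₋(t)))`. -/
noncomputable def pminus (t x : ℝ) : ℝ :=
  Real.exp (-(x + Sigm t / 2) ^ 2 / (2 * Sigm t)) / Real.sqrt (Sigm t)

/-- The Dupire local variance `σ_loc²(t,x)` of the Black–Scholes mixing model. -/
noncomputable def sigloc2 (t x : ℝ) : ℝ :=
  (sigp2 t * pplus t x + sigm2 t * pminus t x) / (pplus t x + pminus t x)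

lemma Sigp_eq (t : ℝ) (ht : 0 < t) (ht1 : t ≤ 1) : Sigp (1 + t) = 3 * t + 2 := by
  unfold Sigp; rw [if_neg (by linarith), if_pos (by linarith)]; ring

lemma Sigm_eq (t : ℝ) (ht : 0 < t) (ht1 : t ≤ 1) : Sigm (1 + t) = t + 2 := by
  unfold Sigm; rw [if_neg (by linarith), if_pos (by linarith)]; ring

lemma sigp2_eq (t : ℝ) (ht : 0 < t) (ht1 : t ≤ 1) : sigp2 (1 + t) = 3 := by
  unfold sigp2; rw [if_neg (by linarith), if_pos (by linarith)]

lemma sigm2_eq (t : ℝ) (ht : 0 < t) (ht1 : t ≤ 1) : sigm2 (1 + t) = 1 := by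
  unfold sigm2; rw [if_neg (by linarith), if_pos (by linarith)]

lemma pplus_eq (t x : ℝ) (ht : 0 < t) (ht1 : t ≤ 1) :
    pplus (1 + t) x = Real.exp (-(x + (3 * t + 2) / 2) ^ 2 / (2 * (3 * t + 2))) / Real.sqrt (3 * t + 2) := by
  unfold pplus; rw [Sigp_eq t ht ht1]

lemma pminus_eq (t x : ℝ) (ht : 0 < t) (ht1 : t ≤ 1) :
    pminus (1 + t) x = Real.exp (-(x + (t + 2) / 2) ^ 2 / (2 * (t + 2))) / Real.sqrt (t + 2) := by
  unfold pminus; rw [Sigm_eq t ht ht1]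

lemma pplus_pos (t x : ℝ) (ht : 0 < t) (ht1 : t ≤ 1) : 0 < pplus (1 + t) x := by
  rw [pplus_eq t x ht ht1]
  exact div_pos (Real.exp_pos _) (Real.sqrt_pos.2 (by linarith))

lemma pminus_pos (t x : ℝ) (ht : 0 < t) (ht1 : t ≤ 1) : 0 < pminus (1 + t) x := by
  rw [pminus_eq t x ht ht1]
  exact div_pos (Real.exp_pos _) (Real.sqrt_pos.2 (by linarith))

lemma ratio_bound (t x : ℝ) (ht : 0 < t) (ht1 : t ≤ 1) :
    pminus (1 + t) x ≤ 2 * Real.exp (1 / 4 - t * x ^ 2 / 15) * pplus (1 + t) x := by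
  rw [pminus_eq t x ht ht1, pplus_eq t x ht ht1]
  set A := -(x + (3 * t + 2) / 2) ^ 2 / (2 * (3 * t + 2)) with hA
  set B := -(x + (t + 2) / 2) ^ 2 / (2 * (t + 2)) with hB
  have hBA : B ≤ A + (1 / 4 - t * x ^ 2 / 15) := by
    have hdiff : B - A = t / 4 - t * x ^ 2 / ((3 * t + 2) * (t + 2)) := by
      rw [hA, hB]; field_simp; ring
    have hd : t * x ^ 2 / 15 ≤ t * x ^ 2 / ((3 * t + 2) * (t + 2)) :=
      div_le_div_of_nonneg_left (by positivity) (by nlinarith) (by nlinarith)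
    linarith
  have h2 : Real.sqrt 2 ≤ Real.sqrt (t + 2) := Real.sqrt_le_sqrt (by linarith)
  have h2pos : (0:ℝ) < Real.sqrt 2 := Real.sqrt_pos.2 (by norm_num)
  have step1 : Real.exp B / Real.sqrt (t + 2) ≤ Real.exp (A + (1 / 4 - t * x ^ 2 / 15)) / Real.sqrt 2 :=
    div_le_div₀ (Real.exp_pos _).le (Real.exp_le_exp.2 hBA) h2pos h2
  refine step1.trans ?_
  rw [Real.exp_add]
  rw [div_le_iff₀ h2pos]
  have hs8 : Real.sqrt (3 * t + 2) ≤ 2 * Real.sqrt 2 := by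
    have : Real.sqrt (3 * t + 2) ≤ Real.sqrt 8 := Real.sqrt_le_sqrt (by linarith)
    have h8 : Real.sqrt 8 = 2 * Real.sqrt 2 := by
      rw [show (8:ℝ) = 2 ^ 2 * 2 by norm_num, Real.sqrt_mul (by positivity),
        Real.sqrt_sq (by norm_num)]
    linarith
  have hspos : (0:ℝ) < Real.sqrt (3 * t + 2) := Real.sqrt_pos.2 (by linarith)
  have hkey : 2 * Real.exp (1 / 4 - t * x ^ 2 / 15) * (Real.exp A / Real.sqrt (3 * t + 2)) * Real.sqrt 2
      = Real.exp A * Real.exp (1 / 4 - t * x ^ 2 / 15) * (2 * Real.sqrt 2 / Real.sqrt (3 * t + 2)) := by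
    field_simp
  rw [hkey]
  have h1le : (1:ℝ) ≤ 2 * Real.sqrt 2 / Real.sqrt (3 * t + 2) := by
    rw [le_div_iff₀ hspos]; linarith
  nlinarith [mul_pos (Real.exp_pos A) (Real.exp_pos (1 / 4 - t * x ^ 2 / 15))]

lemma sigloc2_lower (t x : ℝ) (ht : 0 < t) (ht1 : t ≤ 1) :
    3 - 4 * Real.exp (1 / 4 - t * x ^ 2 / 15) ≤ sigloc2 (1 + t) x := by
  have hp := pplus_pos t x ht ht1
  have hq := pminus_pos t x ht ht1
  have hr := ratio_bound t x ht ht1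
  unfold sigloc2
  rw [sigp2_eq t ht ht1, sigm2_eq t ht ht1, le_div_iff₀ (by linarith)]
  nlinarith [mul_pos (Real.exp_pos (1 / 4 - t * x ^ 2 / 15)) hq]

lemma sigloc2_upper (t x : ℝ) (ht : 0 < t) (ht1 : t ≤ 1) : sigloc2 (1 + t) x ≤ 3 := by
  have hp := pplus_pos t x ht ht1
  have hq := pminus_pos t x ht ht1
  unfold sigloc2
  rw [sigp2_eq t ht ht1, sigm2_eq t ht ht1, div_le_iff₀ (by linarith)]
  nlinarith

lemma exp_tendsto (t : ℝ) (ht : 0 < t) :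
    Filter.Tendsto (fun x : ℝ => 4 * Real.exp (1 / 4 - t * x ^ 2 / 15)) Filter.atTop (nhds 0) := by
  have h1 : Filter.Tendsto (fun x : ℝ => 1 / 4 - t * x ^ 2 / 15) Filter.atTop Filter.atBot := by
    apply Filter.tendsto_atBot_add_const_left
    apply Filter.tendsto_neg_atBot_iff.mpr
    apply Filter.Tendsto.atTop_div_const (by norm_num)
    have hsq : Filter.Tendsto (fun x : ℝ => x ^ 2) Filter.atTop Filter.atTop := by
      apply Filter.tendsto_atTop_mono' _ (h := Filter.eventually_ge_atTop 1 |>.mono fun x hx => ?_) Filter.tendsto_id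
      simp only [id_eq]
      nlinarith [mul_nonneg (le_trans zero_le_one hx) (by linarith : (0:ℝ) ≤ x - 1)]
    exact hsq.const_mul_atTop ht
  have := (Real.tendsto_exp_atBot.comp h1).const_mul (4:ℝ)
  simpa using this

/-- For each fixed `t ∈ (0,1]`, `σ_loc²(1+t, x) → 3` as `x → +∞`, and the convergence
is uniform for `t` in compact intervals `[ε,1]` away from `0`. -/
theorem sigloc2_tendsto_three_at_top :
    (∀ t ∈ Set.Ioc (0 : ℝ) 1,
      Filter.Tendsto (fun x : ℝ => sigloc2 (1 + t) x) Filter.atTop (nhds 3)) ∧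
    (∀ ε ∈ Set.Ioc (0 : ℝ) 1, ∀ η > (0 : ℝ), ∃ M > (0 : ℝ),
      ∀ t ∈ Set.Icc ε 1, ∀ x > M, 3 - η ≤ sigloc2 (1 + t) x) := by
  constructor
  · rintro t ⟨ht, ht1⟩
    have hlo : Filter.Tendsto (fun x : ℝ => 3 - 4 * Real.exp (1 / 4 - t * x ^ 2 / 15))
        Filter.atTop (nhds 3) := by
      have := (tendsto_const_nhds (α := ℝ) (x := (3:ℝ)) (f := Filter.atTop)).sub (exp_tendsto t ht)
      simpa using this
    exact tendsto_of_tendsto_of_tendsto_of_le_of_le hlo tendsto_const_nhds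
      (fun x => sigloc2_lower t x ht ht1) (fun x => sigloc2_upper t x ht ht1)
  · rintro ε ⟨hε, hε1⟩ η hη
    have hev : ∀ᶠ M in Filter.atTop, 4 * Real.exp (1 / 4 - ε * M ^ 2 / 15) ≤ η :=
      (exp_tendsto ε hε).eventually (eventually_le_nhds hη)
    obtain ⟨M, hMη, hM0⟩ := (hev.and (Filter.eventually_gt_atTop 0)).exists
    refine ⟨M, hM0, fun t ⟨htε, ht1⟩ x hx => ?_⟩
    have ht : 0 < t := lt_of_lt_of_le hε htε
    have hmono : Real.exp (1 / 4 - t * x ^ 2 / 15) ≤ Real.exp (1 / 4 - ε * M ^ 2 / 15) := by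
      apply Real.exp_le_exp.2
      have hx2 : M ^ 2 ≤ x ^ 2 := by nlinarith
      have : ε * M ^ 2 ≤ t * x ^ 2 := mul_le_mul htε hx2 (sq_nonneg M) ht.le
      linarith
    have := sigloc2_lower t x ht ht1
    linarith
end

section
/- For every η > 0 there exists δ > 0 such that σ_loc²(2+t, x) ≥ 2 − η for all t ∈ (0,1] and all x ∈ ℝ with |x| < δ; that is, near x = 0 the local variance on the time interval (2,3] stays uniformly (in t) above 2 − η. -/
open Real Set

/-- Near `x = 0` the local variance on the time interval `(2,3]` stays uniformly in `t`
above `2 − η`. -/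
theorem sigloc2_ge_two_near_zero_third_interval :
    ∀ η > (0 : ℝ), ∃ δ > (0 : ℝ), ∀ t ∈ Set.Ioc (0 : ℝ) 1, ∀ x : ℝ,
      |x| < δ → 2 - η ≤ sigloc2 (2 + t) x := by
  intro η hη
  set m : ℝ := min η 1 with hm
  have hm0 : 0 < m := lt_min hη one_pos
  have hlog : 0 < Real.log (1 + m) := Real.log_pos (by linarith)
  refine ⟨Real.sqrt (Real.log (1 + m)), Real.sqrt_pos.mpr hlog, ?_⟩
  intro t ht x hx
  obtain ⟨ht0, ht1⟩ := ht
  have hn1 : ¬ (2 + t ≤ 1) := by linarith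
  have hn2 : ¬ (2 + t ≤ 2) := by linarith
  set A : ℝ := 5 + t with hA
  set B : ℝ := 3 + 3 * t with hB
  have hApos : (0:ℝ) < A := by simp [hA]; linarith
  have hBpos : (0:ℝ) < B := by simp [hB]; linarith
  have hSp : Sigp (2 + t) = A := by simp [Sigp, hn1, hn2, hA]; ring
  have hSm : Sigm (2 + t) = B := by simp [Sigm, hn1, hn2, hB]; ring
  have hsp : sigp2 (2 + t) = 1 := by simp [sigp2, hn1, hn2]
  have hsm : sigm2 (2 + t) = 3 := by simp [sigm2, hn1, hn2]
  set P : ℝ := pplus (2 + t) x with hPdef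
  set M : ℝ := pminus (2 + t) x with hMdef
  have hPpos : 0 < P := by
    rw [hPdef, pplus, hSp]
    positivity
  have hMpos : 0 < M := by
    rw [hMdef, pminus, hSm]
    positivity
  -- key bound : P ≤ (1+m) * M
  have hx2 : x ^ 2 < Real.log (1 + m) := by
    have h1 : x ^ 2 < Real.sqrt (Real.log (1 + m)) ^ 2 := by
      have := abs_nonneg x
      nlinarith [sq_abs x]
    rwa [Real.sq_sqrt hlog.le] at h1
  have hexp : -(x + A / 2) ^ 2 / (2 * A) - (-(x + B / 2) ^ 2 / (2 * B)) ≤ x ^ 2 := by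
    have heq : -(x + A / 2) ^ 2 / (2 * A) - (-(x + B / 2) ^ 2 / (2 * B))
        = x ^ 2 / (2 * B) - x ^ 2 / (2 * A) + (B - A) / 8 := by
      field_simp
      ring
    rw [heq]
    have h1 : x ^ 2 / (2 * B) ≤ x ^ 2 := div_le_self (sq_nonneg x) (by linarith)
    have h2 : 0 ≤ x ^ 2 / (2 * A) := by positivity
    have h3 : B - A ≤ 0 := by simp [hA, hB]; linarith
    linarith
  have hPM : P ≤ (1 + m) * M := by
    rw [hPdef, hMdef, pplus, pminus, hSp, hSm]
    have hsle : Real.sqrt B ≤ Real.sqrt A := by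
      apply Real.sqrt_le_sqrt; simp [hA, hB]; linarith
    have hsB : 0 < Real.sqrt B := Real.sqrt_pos.mpr hBpos
    have step1 : Real.exp (-(x + A / 2) ^ 2 / (2 * A)) / Real.sqrt A
        ≤ Real.exp (-(x + A / 2) ^ 2 / (2 * A)) / Real.sqrt B :=
      div_le_div_of_nonneg_left (Real.exp_pos _).le hsB hsle
    have step2 : Real.exp (-(x + A / 2) ^ 2 / (2 * A))
        ≤ (1 + m) * Real.exp (-(x + B / 2) ^ 2 / (2 * B)) := by
      have : (1 + m) * Real.exp (-(x + B / 2) ^ 2 / (2 * B))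
          = Real.exp (Real.log (1 + m) + -(x + B / 2) ^ 2 / (2 * B)) := by
        rw [Real.exp_add, Real.exp_log (by linarith)]
      rw [this]
      apply Real.exp_le_exp.mpr
      linarith
    calc Real.exp (-(x + A / 2) ^ 2 / (2 * A)) / Real.sqrt A
        ≤ Real.exp (-(x + A / 2) ^ 2 / (2 * A)) / Real.sqrt B := step1
      _ ≤ ((1 + m) * Real.exp (-(x + B / 2) ^ 2 / (2 * B))) / Real.sqrt B := by
          exact div_le_div_of_nonneg_right step2 hsB.le
      _ = (1 + m) * (Real.exp (-(x + B / 2) ^ 2 / (2 * B)) / Real.sqrt B) := by ring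
  -- conclude
  have hloc : sigloc2 (2 + t) x = (P + 3 * M) / (P + M) := by
    rw [sigloc2, hsp, hsm, ← hPdef, ← hMdef, one_mul]
  rw [hloc, le_div_iff₀ (by linarith)]
  rcases le_or_gt η 1 with hη1 | hη1
  · have hmη : m = η := min_eq_left hη1
    rw [hmη] at hPM
    nlinarith [mul_le_mul_of_nonneg_left hPM (by linarith : (0:ℝ) ≤ 1 - η)]
  · nlinarith
end

section
/- There exist ε ∈ (0, 1/2) and δ > 0 such that every measurable path φ : [0,3] → ℝ satisfying φ(t) > 1/δ for all t ∈ [1+ε, 2−ε] and |φ(t)| < δ for all t ∈ (2,3] has ∫₀³ σ_loc²(t, φ(t)) dt > 6. In particular, the integrated local variance along such paths strictly exceeds the (deterministic) total realized variance 6 of the original mixing model. -/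
open Real Set MeasureTheory

private lemma measurable_Sigp : Measurable Sigp :=
  Measurable.ite (measurableSet_le measurable_id measurable_const)
    (measurable_const.mul measurable_id)
    (Measurable.ite (measurableSet_le measurable_id measurable_const)
      ((measurable_const.mul measurable_id).sub measurable_const)
      (measurable_id.add measurable_const))

private lemma measurable_Sigm : Measurable Sigm :=
  Measurable.ite (measurableSet_le measurable_id measurable_const)
    (measurable_const.mul measurable_id)
    (Measurable.ite (measurableSet_le measurable_id measurable_const)
      (measurable_id.add measurable_const)
      ((measurable_const.mul measurable_id).sub measurable_const))

private lemma measurable_sigp2 : Measurable sigp2 :=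
  Measurable.ite (measurableSet_le measurable_id measurable_const) measurable_const
    (Measurable.ite (measurableSet_le measurable_id measurable_const)
      measurable_const measurable_const)

private lemma measurable_sigm2 : Measurable sigm2 :=
  Measurable.ite (measurableSet_le measurable_id measurable_const) measurable_const
    (Measurable.ite (measurableSet_le measurable_id measurable_const)
      measurable_const measurable_const)

private lemma measurable_sigloc2_comp {φ : ℝ → ℝ} (hφ : Measurable φ) :
    Measurable (fun t => sigloc2 t (φ t)) := by
  have h1 := measurable_Sigp
  have h2 := measurable_Sigm
  have h3 := measurable_sigp2
  have h4 := measurable_sigm2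
  unfold sigloc2 pplus pminus
  fun_prop

private lemma pplus_pos_s7 {t x : ℝ} (h : 0 < Sigp t) : 0 < pplus t x :=
  div_pos (Real.exp_pos _) (Real.sqrt_pos.mpr h)

private lemma pminus_pos_s7 {t x : ℝ} (h : 0 < Sigm t) : 0 < pminus t x :=
  div_pos (Real.exp_pos _) (Real.sqrt_pos.mpr h)

private lemma Sig_pos {t : ℝ} (ht : t ∈ Set.Ioc (0:ℝ) 3) : 0 < Sigp t ∧ 0 < Sigm t := by
  obtain ⟨h0, h3⟩ := ht
  unfold Sigp Sigm
  split_ifs <;> constructor <;> linarith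

private lemma sigloc2_bounds {t : ℝ} (x : ℝ) (ht : t ∈ Set.Ioc (0:ℝ) 3) :
    0 ≤ sigloc2 t x ∧ sigloc2 t x ≤ 3 := by
  obtain ⟨hp, hm⟩ := Sig_pos ht
  have ha := pplus_pos_s7 (x := x) hp
  have hb := pminus_pos_s7 (x := x) hm
  have h1 : 1 ≤ sigp2 t ∧ sigp2 t ≤ 3 := by unfold sigp2; split_ifs <;> norm_num
  have h2 : 1 ≤ sigm2 t ∧ sigm2 t ≤ 3 := by unfold sigm2; split_ifs <;> norm_num
  unfold sigloc2
  constructor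
  · apply div_nonneg _ (by linarith)
    nlinarith [h1.1, h2.1]
  · rw [div_le_iff₀ (by linarith)]
    nlinarith [h1.2, h2.2]

private lemma sigloc2_eq_two {t : ℝ} (x : ℝ) (ht : t ∈ Set.Ioc (0:ℝ) 1) :
    sigloc2 t x = 2 := by
  obtain ⟨h0, h1⟩ := ht
  have hp : 0 < pplus t x := pplus_pos_s7 (by unfold Sigp; rw [if_pos h1]; linarith)
  have hpm : pplus t x = pminus t x := by
    unfold pplus pminus Sigp Sigm; rw [if_pos h1, if_pos h1]
  have hp2 : sigp2 t = 2 := by unfold sigp2; rw [if_pos h1]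
  have hm2 : sigm2 t = 2 := by unfold sigm2; rw [if_pos h1]
  unfold sigloc2
  rw [hp2, hm2, ← hpm, div_eq_iff (by linarith)]
  ring

private lemma sigloc2_ge_one {t : ℝ} (x : ℝ) (ht : t ∈ Set.Ioc (1:ℝ) 2) :
    1 ≤ sigloc2 t x := by
  obtain ⟨h1, h2⟩ := ht
  have hn : ¬ t ≤ 1 := not_le.mpr h1
  have ha : 0 < pplus t x := pplus_pos_s7 (by unfold Sigp; rw [if_neg hn, if_pos h2]; linarith)
  have hb : 0 < pminus t x := pminus_pos_s7 (by unfold Sigm; rw [if_neg hn, if_pos h2]; linarith)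
  have hp2 : sigp2 t = 3 := by unfold sigp2; rw [if_neg hn, if_pos h2]
  have hm2 : sigm2 t = 1 := by unfold sigm2; rw [if_neg hn, if_pos h2]
  unfold sigloc2
  rw [hp2, hm2, le_div_iff₀ (by linarith)]
  nlinarith

set_option maxHeartbeats 1000000 in
private lemma sigloc2_middle {t x : ℝ} (ht : t ∈ Set.Icc (101/100:ℝ) (199/100))
    (hx : 100 ≤ x) : 5/2 ≤ sigloc2 t x := by
  obtain ⟨h1, h2⟩ := ht
  have hn : ¬ t ≤ 1 := not_le.mpr (by linarith)
  have h2' : t ≤ 2 := by linarith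
  have hA : Sigp t = 3*t - 1 := by unfold Sigp; rw [if_neg hn, if_pos h2']
  have hB : Sigm t = t + 1 := by unfold Sigm; rw [if_neg hn, if_pos h2']
  have hApos : (0:ℝ) < 3*t - 1 := by linarith
  have hBpos : (0:ℝ) < t + 1 := by linarith
  have hp2 : sigp2 t = 3 := by unfold sigp2; rw [if_neg hn, if_pos h2']
  have hm2 : sigm2 t = 1 := by unfold sigm2; rw [if_neg hn, if_pos h2']
  have ha : 0 < pplus t x := pplus_pos_s7 (by rw [hA]; exact hApos)
  have hb : 0 < pminus t x := pminus_pos_s7 (by rw [hB]; exact hBpos)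
  have hx2 : (10000:ℝ) ≤ x^2 := by nlinarith
  -- key : pplus ≥ 3 * pminus
  have key : 3 * pminus t x ≤ pplus t x := by
    unfold pplus pminus
    rw [hA, hB]
    set A := 3*t - 1 with hAd
    set B := t + 1 with hBd
    have hAB : A * B ≤ 15 := by nlinarith
    have hABpos : 0 < A * B := mul_pos hApos hBpos
    have hE2 : 2 ≤ (A - B) * (x^2 - A*B/4) / (2*A*B) := by
      rw [le_div_iff₀ (by positivity)]
      have hd : (1/50:ℝ) ≤ A - B := by rw [hAd, hBd]; linarith
      have hpos : (0:ℝ) ≤ x^2 - A*B/4 := by nlinarith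
      nlinarith [mul_le_mul_of_nonneg_right hd hpos]
    have huv : -(x + B/2)^2/(2*B) + 2 ≤ -(x + A/2)^2/(2*A) := by
      have hE : -(x + A/2)^2/(2*A) - (-(x + B/2)^2/(2*B))
          = (A - B) * (x^2 - A*B/4) / (2*A*B) := by
        field_simp
        ring
      linarith [hE2, hE.le, hE.ge]
    have hsA : Real.sqrt A ≤ 9/4 := by
      rw [show (9/4:ℝ) = Real.sqrt ((9/4)^2) by rw [Real.sqrt_sq (by norm_num : (0:ℝ) ≤ 9/4)]]
      exact Real.sqrt_le_sqrt (by nlinarith)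
    have hsB : (7/5:ℝ) ≤ Real.sqrt B := by
      rw [show (7/5:ℝ) = Real.sqrt ((7/5)^2) by rw [Real.sqrt_sq (by norm_num : (0:ℝ) ≤ 7/5)]]
      exact Real.sqrt_le_sqrt (by nlinarith)
    have hsApos : 0 < Real.sqrt A := Real.sqrt_pos.mpr hApos
    have hsBpos : (0:ℝ) < Real.sqrt B := by linarith
    have hexp2 : (7:ℝ) ≤ Real.exp 2 := by
      have h := Real.exp_one_gt_d9
      have he : Real.exp 2 = Real.exp 1 * Real.exp 1 := by
        rw [← Real.exp_add]; norm_num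
      nlinarith
    set u := -(x + A/2)^2/(2*A)
    set v := -(x + B/2)^2/(2*B)
    have hexpuv : Real.exp v * 7 ≤ Real.exp u := by
      calc Real.exp v * 7 ≤ Real.exp v * Real.exp 2 :=
            mul_le_mul_of_nonneg_left hexp2 (Real.exp_pos v).le
        _ = Real.exp (v + 2) := (Real.exp_add v 2).symm
        _ ≤ Real.exp u := Real.exp_le_exp.mpr huv
    rw [mul_div_assoc', div_le_div_iff₀ hsBpos hsApos]
    have k1 : (3 * Real.exp v) * Real.sqrt A ≤ (3 * Real.exp v) * (9/4) :=
      mul_le_mul_of_nonneg_left hsA (by positivity)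
    have k2 : (Real.exp v * 7) * (7/5) ≤ (Real.exp v * 7) * Real.sqrt B :=
      mul_le_mul_of_nonneg_left hsB (by positivity)
    have k3 : (Real.exp v * 7) * Real.sqrt B ≤ Real.exp u * Real.sqrt B :=
      mul_le_mul_of_nonneg_right hexpuv (le_of_lt hsBpos)
    nlinarith [Real.exp_pos v]
  unfold sigloc2
  rw [hp2, hm2, le_div_iff₀ (by linarith)]
  linarith

set_option maxHeartbeats 1000000 in
private lemma sigloc2_tail {t x : ℝ} (ht : t ∈ Set.Ioc (2:ℝ) 3) (hx : |x| ≤ 1/100) :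
    2 ≤ sigloc2 t x := by
  obtain ⟨h2, h3⟩ := ht
  have hn1 : ¬ t ≤ 1 := not_le.mpr (by linarith)
  have hn2 : ¬ t ≤ 2 := not_le.mpr h2
  have hA : Sigp t = t + 3 := by unfold Sigp; rw [if_neg hn1, if_neg hn2]
  have hB : Sigm t = 3*t - 3 := by unfold Sigm; rw [if_neg hn1, if_neg hn2]
  have hp2 : sigp2 t = 1 := by unfold sigp2; rw [if_neg hn1, if_neg hn2]
  have hm2 : sigm2 t = 3 := by unfold sigm2; rw [if_neg hn1, if_neg hn2]
  have hApos : (0:ℝ) < t + 3 := by linarith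
  have hBpos : (0:ℝ) < 3*t - 3 := by linarith
  have ha : 0 < pplus t x := pplus_pos_s7 (by rw [hA]; exact hApos)
  have hb : 0 < pminus t x := pminus_pos_s7 (by rw [hB]; exact hBpos)
  have hx2 : x^2 ≤ 1/10000 := by nlinarith [sq_abs x, abs_nonneg x]
  have key : pplus t x ≤ pminus t x := by
    unfold pplus pminus
    rw [hA, hB]
    set A := t + 3 with hAd
    set B := 3*t - 3 with hBd
    apply div_le_div₀ (le_of_lt (Real.exp_pos _)) _ (Real.sqrt_pos.mpr hBpos)
      (Real.sqrt_le_sqrt (by rw [hAd, hBd]; linarith))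
    apply Real.exp_le_exp.mpr
    have hE : -(x + B/2)^2/(2*B) - (-(x + A/2)^2/(2*A))
        = (A - B) * (A*B/4 - x^2) / (2*A*B) := by
      field_simp
      ring
    have h0 : 0 ≤ (A - B) * (A*B/4 - x^2) / (2*A*B) := by
      apply div_nonneg _ (by positivity)
      have hd : (0:ℝ) ≤ A - B := by rw [hAd, hBd]; linarith
      have hq : (0:ℝ) ≤ A*B/4 - x^2 := by nlinarith
      exact mul_nonneg hd hq
    linarith [h0, hE.le, hE.ge]
  unfold sigloc2
  rw [hp2, hm2, le_div_iff₀ (by linarith)]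
  linarith

private lemma piece_lb {f : ℝ → ℝ} {a b c : ℝ} (hab : a ≤ b)
    (hf : MeasureTheory.IntegrableOn f (Set.Ioc a b))
    (h : ∀ t ∈ Set.Ioc a b, c ≤ f t) :
    c * (b - a) ≤ ∫ t in a..b, f t := by
  rw [intervalIntegral.integral_of_le hab]
  calc c * (b - a) = ∫ _ in Set.Ioc a b, c := by
        simp [Real.volume_Ioc, ENNReal.toReal_ofReal (sub_nonneg.mpr hab), mul_comm, hab]
    _ ≤ _ := MeasureTheory.setIntegral_mono_on
        (MeasureTheory.integrableOn_const (by simp)) hf measurableSet_Ioc h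

/-- There exist `ε ∈ (0,1/2)` and `δ > 0` such that every measurable path `φ` which is
large (`φ(t) > 1/δ`) on `[1+ε, 2−ε]` and small (`|φ(t)| < δ`) on `(2,3]` has integrated
local variance strictly larger than `6`, the deterministic total realized variance of
the original mixing model. -/
theorem exists_paths_with_integral_gt_six :
    ∃ ε ∈ Set.Ioo (0 : ℝ) (1 / 2), ∃ δ > (0 : ℝ), ∀ φ : ℝ → ℝ, Measurable φ →
      (∀ t ∈ Set.Icc (1 + ε) (2 - ε), 1 / δ < φ t) →
      (∀ t ∈ Set.Ioc (2 : ℝ) 3, |φ t| < δ) →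
      6 < ∫ t in (0 : ℝ)..3, sigloc2 t (φ t) := by
  refine ⟨1/100, by norm_num, 1/100, by norm_num, ?_⟩
  intro φ hφ hmid htail
  have hmid' : ∀ t ∈ Set.Icc (101/100:ℝ) (199/100), (100:ℝ) ≤ φ t := by
    intro t ht
    have h := hmid t (by constructor <;> [linarith [ht.1]; linarith [ht.2]])
    norm_num at h
    linarith
  set f : ℝ → ℝ := fun t => sigloc2 t (φ t) with hf
  have hmeas : Measurable f := measurable_sigloc2_comp hφ
  have hbound : ∀ t ∈ Set.Ioc (0:ℝ) 3, ‖f t‖ ≤ 3 := by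
    intro t ht
    have h := sigloc2_bounds (φ t) ht
    rw [Real.norm_eq_abs, abs_le]
    exact ⟨by linarith [h.1], h.2⟩
  have hInt : MeasureTheory.IntegrableOn f (Set.Ioc 0 3) := by
    apply MeasureTheory.Integrable.mono'
      (MeasureTheory.integrableOn_const (C := (3:ℝ)) measure_Ioc_lt_top.ne)
      (hmeas.aestronglyMeasurable.restrict)
    filter_upwards [MeasureTheory.ae_restrict_mem measurableSet_Ioc] with t ht
      using hbound t ht
  have hII : IntervalIntegrable f MeasureTheory.volume 0 3 := by
    rw [intervalIntegrable_iff_integrableOn_Ioc_of_le (by norm_num)]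
    exact hInt
  have hsub : ∀ a b : ℝ, 0 ≤ a → a ≤ b → b ≤ 3 → IntervalIntegrable f MeasureTheory.volume a b := by
    intro a b ha hab hb
    apply hII.mono_set
    rw [Set.uIcc_of_le hab, Set.uIcc_of_le (by norm_num : (0:ℝ) ≤ 3)]
    exact Set.Icc_subset_Icc ha hb
  have hIOn : ∀ a b : ℝ, 0 ≤ a → b ≤ 3 → MeasureTheory.IntegrableOn f (Set.Ioc a b) :=
    fun a b ha hb => hInt.mono_set (Set.Ioc_subset_Ioc ha hb)
  have split1 : (∫ t in (0:ℝ)..3, f t) = (∫ t in (0:ℝ)..1, f t) + (∫ t in (1:ℝ)..3, f t) :=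
    (intervalIntegral.integral_add_adjacent_intervals
      (hsub 0 1 (by norm_num) (by norm_num) (by norm_num))
      (hsub 1 3 (by norm_num) (by norm_num) (by norm_num))).symm
  have split2 : (∫ t in (1:ℝ)..3, f t)
      = (∫ t in (1:ℝ)..(101/100), f t) + (∫ t in (101/100:ℝ)..3, f t) :=
    (intervalIntegral.integral_add_adjacent_intervals
      (hsub 1 (101/100) (by norm_num) (by norm_num) (by norm_num))
      (hsub (101/100) 3 (by norm_num) (by norm_num) (by norm_num))).symm
  have split3 : (∫ t in (101/100:ℝ)..3, f t)
      = (∫ t in (101/100:ℝ)..(199/100), f t) + (∫ t in (199/100:ℝ)..3, f t) :=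
    (intervalIntegral.integral_add_adjacent_intervals
      (hsub (101/100) (199/100) (by norm_num) (by norm_num) (by norm_num))
      (hsub (199/100) 3 (by norm_num) (by norm_num) (by norm_num))).symm
  have split4 : (∫ t in (199/100:ℝ)..3, f t)
      = (∫ t in (199/100:ℝ)..2, f t) + (∫ t in (2:ℝ)..3, f t) :=
    (intervalIntegral.integral_add_adjacent_intervals
      (hsub (199/100) 2 (by norm_num) (by norm_num) (by norm_num))
      (hsub 2 3 (by norm_num) (by norm_num) (by norm_num))).symm
  have B1 : (2:ℝ) * (1 - 0) ≤ ∫ t in (0:ℝ)..1, f t := by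
    apply piece_lb (by norm_num) (hIOn 0 1 (by norm_num) (by norm_num))
    intro t ht
    exact (sigloc2_eq_two (φ t) ht).ge
  have B2 : (1:ℝ) * (101/100 - 1) ≤ ∫ t in (1:ℝ)..(101/100), f t := by
    apply piece_lb (by norm_num) (hIOn 1 (101/100) (by norm_num) (by norm_num))
    intro t ht
    exact sigloc2_ge_one (φ t) ⟨ht.1, by linarith [ht.2]⟩
  have B3 : (5/2:ℝ) * (199/100 - 101/100) ≤ ∫ t in (101/100:ℝ)..(199/100), f t := by
    apply piece_lb (by norm_num) (hIOn (101/100) (199/100) (by norm_num) (by norm_num))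
    intro t ht
    have htm : t ∈ Set.Icc (101/100:ℝ) (199/100) := ⟨le_of_lt ht.1, ht.2⟩
    exact sigloc2_middle htm (hmid' t htm)
  have B4 : (1:ℝ) * (2 - 199/100) ≤ ∫ t in (199/100:ℝ)..2, f t := by
    apply piece_lb (by norm_num) (hIOn (199/100) 2 (by norm_num) (by norm_num))
    intro t ht
    exact sigloc2_ge_one (φ t) ⟨by linarith [ht.1], ht.2⟩
  have B5 : (2:ℝ) * (3 - 2) ≤ ∫ t in (2:ℝ)..3, f t := by
    apply piece_lb (by norm_num) (hIOn 2 3 (by norm_num) (by norm_num))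
    intro t ht
    exact sigloc2_tail ht (le_of_lt (htail t ht))
  rw [split1, split2, split3, split4]
  linarith
end

section
/- There exists a constant L > 0 such that for every t ∈ (0,3] the map x ↦ σ_loc²(t, x) is L-Lipschitz on ℝ, i.e. |σ_loc²(t,x) − σ_loc²(t,y)| ≤ L|x − y| for all x, y ∈ ℝ, with L independent of t. (Consequently, since σ_loc² is also bounded away from 0, x ↦ σ_loc(t,x) = √(σ_loc²(t,x)) is Lipschitz uniformly in t.) -/
open Real Set

-- Auxiliary lemmas --

lemma exp_neg_sq_lip_aux {c x y : ℝ} (hc0 : 0 ≤ c) (hc : c ≤ 1/2) (hxy : |x| ≤ |y|) :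
    |Real.exp (-(c*x^2)) - Real.exp (-(c*y^2))| ≤ 2 * |x - y| := by
  have hx2 : x^2 ≤ y^2 := by
    have := pow_le_pow_left₀ (abs_nonneg x) hxy 2
    simpa [sq_abs] using this
  have hle : Real.exp (-(c*y^2)) ≤ Real.exp (-(c*x^2)) := by
    apply Real.exp_le_exp.mpr; nlinarith
  rw [abs_of_nonneg (by linarith)]
  have hu1 : Real.exp (-(c*x^2)) ≤ 1 := by
    apply Real.exp_le_one_iff.mpr; nlinarith [sq_nonneg x]
  by_cases h2 : 2 ≤ |x - y|
  · have : Real.exp (-(c*y^2)) > 0 := Real.exp_pos _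
    linarith
  · push_neg at h2
    have hE : (0:ℝ) ≤ Real.exp (-(c*x^2)) := le_of_lt (Real.exp_pos _)
    have key : Real.exp (-(c*x^2)) - Real.exp (-(c*y^2)) ≤
        Real.exp (-(c*x^2)) * (c*y^2 - c*x^2) := by
      have h1 := Real.add_one_le_exp (-(c*y^2 - c*x^2))
      have h3 : Real.exp (-(c*y^2)) = Real.exp (-(c*x^2)) * Real.exp (-(c*y^2 - c*x^2)) := by
        rw [← Real.exp_add]; ring_nf
      rw [h3]
      nlinarith [Real.exp_pos (-(c*x^2))]
    have hd1 : |y| - |x| ≤ |x - y| := by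
      have := abs_sub_abs_le_abs_sub y x
      rw [abs_sub_comm] at this; linarith
    have hd2 : |y| + |x| ≤ 2*|x| + |x - y| := by linarith
    have habs : (0:ℝ) ≤ |y| + |x| := by positivity
    have hmul : (|y| - |x|) * (|y| + |x|) ≤ |x-y| * (2*|x| + |x-y|) :=
      mul_le_mul hd1 hd2 habs (abs_nonneg _)
    have hsum : c*y^2 - c*x^2 ≤ c * (|x-y| * (2*|x| + |x-y|)) := by
      have hyx : y^2 - x^2 = (|y| - |x|) * (|y| + |x|) := by
        rw [← sq_abs x, ← sq_abs y]; ring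
      have := mul_le_mul_of_nonneg_left hmul hc0
      nlinarith
    have hB1 : 2*c*|x| * Real.exp (-(c*x^2)) ≤ 1 := by
      have hx1 : 2*c*|x| ≤ 1 + c*x^2 := by
        nlinarith [sq_nonneg (|x| - 1), sq_abs x, abs_nonneg x]
      have h1 : 1 + c*x^2 ≤ Real.exp (c*x^2) := by
        have := Real.add_one_le_exp (c*x^2); linarith
      have hprod : Real.exp (c*x^2) * Real.exp (-(c*x^2)) = 1 := by
        rw [← Real.exp_add]; simp
      nlinarith [mul_le_mul_of_nonneg_right (hx1.trans h1) hE]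
    have hsq : |x-y|^2 ≤ 2*|x-y| := by nlinarith [abs_nonneg (x-y)]
    have hcE : c * Real.exp (-(c*x^2)) ≤ 1/2 := by nlinarith
    have hterm2 : c * Real.exp (-(c*x^2)) * |x-y|^2 ≤ |x-y| := by
      nlinarith [mul_le_mul hcE hsq (by positivity) (by norm_num : (0:ℝ) ≤ 1/2)]
    have hterm1 : (2*c*|x| * Real.exp (-(c*x^2))) * |x-y| ≤ 1 * |x-y| :=
      mul_le_mul_of_nonneg_right hB1 (abs_nonneg _)
    calc Real.exp (-(c*x^2)) - Real.exp (-(c*y^2))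
        ≤ Real.exp (-(c*x^2)) * (c*y^2 - c*x^2) := key
      _ ≤ Real.exp (-(c*x^2)) * (c * (|x-y| * (2*|x| + |x-y|))) :=
          mul_le_mul_of_nonneg_left hsum hE
      _ = (2*c*|x| * Real.exp (-(c*x^2))) * |x-y|
          + c * Real.exp (-(c*x^2)) * |x-y|^2 := by ring
      _ ≤ 1 * |x-y| + |x-y| := add_le_add hterm1 hterm2
      _ = 2 * |x - y| := by ring

lemma exp_neg_sq_lip {c : ℝ} (hc0 : 0 ≤ c) (hc : c ≤ 1/2) (x y : ℝ) :
    |Real.exp (-(c*x^2)) - Real.exp (-(c*y^2))| ≤ 2 * |x - y| := by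
  rcases le_total (|x|) (|y|) with h | h
  · exact exp_neg_sq_lip_aux hc0 hc h
  · rw [abs_sub_comm]
    have := exp_neg_sq_lip_aux hc0 hc h
    rwa [abs_sub_comm y x] at this


noncomputable def gker (S x : ℝ) : ℝ :=
  Real.exp (-(x + S / 2) ^ 2 / (2 * S)) / Real.sqrt S

lemma gker_pos {S : ℝ} (hS : 0 < S) (x : ℝ) : 0 < gker S x := by
  unfold gker
  exact div_pos (Real.exp_pos _) (Real.sqrt_pos.mpr hS)

lemma gker_ratio {Sp Sm : ℝ} (hp : 0 < Sp) (hm : 0 < Sm) (x : ℝ) :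
    gker Sm x / gker Sp x =
      (Real.sqrt Sp / Real.sqrt Sm * Real.exp ((Sp - Sm)/8)) *
        Real.exp (-((Sp - Sm)/(2*Sp*Sm) * x^2)) := by
  have hsp : Real.sqrt Sp ≠ 0 := ne_of_gt (Real.sqrt_pos.mpr hp)
  have hsm : Real.sqrt Sm ≠ 0 := ne_of_gt (Real.sqrt_pos.mpr hm)
  have hA : -(x + Sm / 2) ^ 2 / (2 * Sm) =
      -(x + Sp / 2) ^ 2 / (2 * Sp) + ((Sp - Sm)/8 + -((Sp - Sm)/(2*Sp*Sm) * x^2)) := by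
    field_simp
    ring
  unfold gker
  rw [hA, Real.exp_add, Real.exp_add]
  field_simp


lemma key_lemma {Sp Sm a b : ℝ} (hm : 2 ≤ Sm) (hms : Sm ≤ Sp) (hp : Sp ≤ 6)
    (hab : |a - b| ≤ 2) (x y : ℝ) :
    |(a * gker Sp x + b * gker Sm x) / (gker Sp x + gker Sm x)
      - (a * gker Sp y + b * gker Sm y) / (gker Sp y + gker Sm y)| ≤ 12 * |x - y| := by
  have hSp : (0:ℝ) < Sp := by linarith
  have hSm : (0:ℝ) < Sm := by linarith
  set c : ℝ := (Sp - Sm)/(2*Sp*Sm) with hc_def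
  set K : ℝ := Real.sqrt Sp / Real.sqrt Sm * Real.exp ((Sp - Sm)/8) with hK_def
  have hc0 : 0 ≤ c := by
    apply div_nonneg (by linarith); positivity
  have hc12 : c ≤ 1/2 := by
    rw [hc_def, div_le_iff₀ (by positivity)]
    nlinarith
  have hK0 : 0 < K := by
    apply mul_pos (div_pos (Real.sqrt_pos.mpr hSp) (Real.sqrt_pos.mpr hSm)) (Real.exp_pos _)
  have hK3 : K ≤ 3 := by
    have h1 : Real.sqrt Sp / Real.sqrt Sm ≤ Real.sqrt 3 := by
      rw [← Real.sqrt_div (le_of_lt hSp)]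
      apply Real.sqrt_le_sqrt
      rw [div_le_iff₀ hSm]; linarith
    have h2 : Real.exp ((Sp - Sm)/8) ≤ Real.sqrt 3 := by
      have e12 : Real.exp ((Sp - Sm)/8) ≤ Real.exp (1/2) := by
        apply Real.exp_le_exp.mpr; linarith
      have he : Real.exp (1/2) ≤ Real.sqrt 3 := by
        have hsq : Real.exp (1/2) ^ 2 ≤ 3 := by
          rw [sq, ← Real.exp_add]
          norm_num
          linarith [Real.exp_one_lt_d9]
        calc Real.exp (1/2) = Real.sqrt (Real.exp (1/2) ^ 2) :=
              (Real.sqrt_sq (le_of_lt (Real.exp_pos _))).symm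
          _ ≤ Real.sqrt 3 := Real.sqrt_le_sqrt hsq
      linarith
    calc K ≤ Real.sqrt 3 * Real.sqrt 3 := by
          apply mul_le_mul h1 h2 (le_of_lt (Real.exp_pos _)) (Real.sqrt_nonneg _)
      _ = 3 := Real.mul_self_sqrt (by norm_num)
  -- ratio function
  set r : ℝ → ℝ := fun z => gker Sm z / gker Sp z with hr_def
  have hr_pos : ∀ z, 0 < r z := fun z => div_pos (gker_pos hSm z) (gker_pos hSp z)
  have hr_eq : ∀ z, r z = K * Real.exp (-(c * z^2)) := fun z => gker_ratio hSp hSm z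
  -- difference formula
  have hF : ∀ z, (a * gker Sp z + b * gker Sm z) / (gker Sp z + gker Sm z)
      = (a + b * r z) / (1 + r z) := by
    intro z
    have h1 : gker Sp z ≠ 0 := ne_of_gt (gker_pos hSp z)
    have h2 : gker Sp z + gker Sm z ≠ 0 :=
      ne_of_gt (add_pos (gker_pos hSp z) (gker_pos hSm z))
    have h3 : (1:ℝ) + r z ≠ 0 := by have := hr_pos z; intro h; linarith
    rw [hr_def]
    field_simp
  rw [hF x, hF y]
  have hdx := hr_pos x
  have hdy := hr_pos y
  have hdiff : (a + b * r x) / (1 + r x) - (a + b * r y) / (1 + r y)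
      = (b - a) * (r x - r y) / ((1 + r x) * (1 + r y)) := by
    have h3x : (1:ℝ) + r x ≠ 0 := by intro h; linarith
    have h3y : (1:ℝ) + r y ≠ 0 := by intro h; linarith
    field_simp
    ring
  rw [hdiff, abs_div, abs_mul]
  have hden : 1 ≤ |(1 + r x) * (1 + r y)| := by
    rw [abs_of_pos (mul_pos (by linarith) (by linarith))]
    nlinarith
  have hba : |b - a| ≤ 2 := by rwa [abs_sub_comm]
  have hrxy : |r x - r y| ≤ 6 * |x - y| := by
    rw [hr_eq x, hr_eq y, ← mul_sub, abs_mul, abs_of_pos hK0]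
    calc K * |Real.exp (-(c*x^2)) - Real.exp (-(c*y^2))| ≤ 3 * (2 * |x - y|) := by
          apply mul_le_mul hK3 (exp_neg_sq_lip hc0 hc12 x y) (abs_nonneg _) (by norm_num)
      _ = 6 * |x - y| := by ring
  calc |b - a| * |r x - r y| / |(1 + r x) * (1 + r y)|
      ≤ |b - a| * |r x - r y| / 1 := by
        apply div_le_div_of_nonneg_left (by positivity) (by norm_num) hden
      _ = |b - a| * |r x - r y| := by ring
      _ ≤ 2 * (6 * |x - y|) := by
        apply mul_le_mul hba hrxy (abs_nonneg _) (by norm_num)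
      _ = 12 * |x - y| := by ring

/-- There is a constant `L > 0`, independent of `t`, such that for every `t ∈ (0,3]`
the map `x ↦ σ_loc²(t,x)` is `L`-Lipschitz on `ℝ`. -/
theorem sigloc2_lipschitz_uniformly_in_time :
    ∃ L > (0 : ℝ), ∀ t ∈ Set.Ioc (0 : ℝ) 3, ∀ x y : ℝ,
      |sigloc2 t x - sigloc2 t y| ≤ L * |x - y| := by
  refine ⟨12, by norm_num, ?_⟩
  rintro t ⟨ht0, ht3⟩ x y
  by_cases ht1 : t ≤ 1
  · -- on (0,1] the two branches coincide and sigloc2 ≡ 2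
    have hconst : ∀ z : ℝ, sigloc2 t z = 2 := by
      intro z
      have hP : 0 < gker (2*t) z := gker_pos (by linarith) z
      show (sigp2 t * pplus t z + sigm2 t * pminus t z) / (pplus t z + pminus t z) = 2
      have h1 : pplus t z = gker (2*t) z := by
        unfold pplus gker Sigp; rw [if_pos ht1]
      have h2 : pminus t z = gker (2*t) z := by
        unfold pminus gker Sigm; rw [if_pos ht1]
      have h3 : sigp2 t = 2 := by unfold sigp2; rw [if_pos ht1]
      have h4 : sigm2 t = 2 := by unfold sigm2; rw [if_pos ht1]
      rw [h1, h2, h3, h4]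
      rw [div_eq_iff (by linarith)]
      ring
    rw [hconst x, hconst y]
    simp [abs_nonneg]
  · push_neg at ht1
    by_cases ht2 : t ≤ 2
    · -- t ∈ (1,2]: Sp = 3t-1, Sm = t+1, a = 3, b = 1
      have heq : ∀ z : ℝ, sigloc2 t z =
          (3 * gker (3*t-1) z + 1 * gker (t+1) z) / (gker (3*t-1) z + gker (t+1) z) := by
        intro z
        unfold sigloc2 pplus pminus Sigp Sigm sigp2 sigm2 gker
        rw [if_neg (by linarith), if_pos ht2, if_neg (by linarith), if_pos ht2,
          if_neg (by linarith), if_pos ht2, if_neg (by linarith), if_pos ht2]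
      rw [heq x, heq y]
      exact key_lemma (by linarith) (by linarith) (by linarith) (by norm_num) x y
    · -- t ∈ (2,3]: Sp = t+3, Sm = 3t-3, a = 1, b = 3
      push_neg at ht2
      have heq : ∀ z : ℝ, sigloc2 t z =
          (1 * gker (t+3) z + 3 * gker (3*t-3) z) / (gker (t+3) z + gker (3*t-3) z) := by
        intro z
        unfold sigloc2 pplus pminus Sigp Sigm sigp2 sigm2 gker
        rw [if_neg (by linarith), if_neg (by linarith), if_neg (by linarith),
          if_neg (by linarith), if_neg (by linarith), if_neg (by linarith),
          if_neg (by linarith), if_neg (by linarith)]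
      rw [heq x, heq y]
      exact key_lemma (by linarith) (by linarith) (by linarith) (by norm_num) x y
end
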